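/- Let d : ℝ → ℝ be any function, let n be a positive integer, and let f : Ω → ℝ^n be a Fréchet differentiable injective function on a nonempty open set Ω ⊆ ℝ^n whose derivative f' is continuous and nowhere singular (so that f has a differentiable inverse f⁻¹ on the open set f(Ω)). If d is a derivation with respect to f, then d is a derivation with respect to f⁻¹, i.e., d(f⁻¹(y)) = (f⁻¹)'(y) d(y) for all y ∈ f(Ω). -/

import Mathlib

/-- If `f : Ω → ℝⁿ` is an injective Fréchet differentiable function on a nonempty open set
`Ω ⊆ ℝⁿ` with a continuous nowhere singular derivative and `d` is a derivation with respect
to `f`, then `d` is a derivation with respect to the inverse `f⁻¹` on `f(Ω)`. -/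
theorem stmt_2 (d : ℝ → ℝ) (n : ℕ) (hn : 0 < n)
    (Ω : Set (Fin n → ℝ)) (hΩopen : IsOpen Ω) (hΩne : Ω.Nonempty)
    (f finv : (Fin n → ℝ) → Fin n → ℝ)
    (hf : ∀ x ∈ Ω, DifferentiableAt ℝ f x)
    (hfc : ContinuousOn (fun x => fderiv ℝ f x) Ω)
    (hfns : ∀ x ∈ Ω, Function.Bijective (fderiv ℝ f x))
    (hinj : Set.InjOn f Ω)
    (hfinv : ∀ x ∈ Ω, finv (f x) = x)
    (hdf : ∀ x ∈ Ω, (fun i => d (f x i)) = fderiv ℝ f x (fun i => d (x i))) :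
    ∀ y ∈ f '' Ω,
      (fun i => d (finv y i)) = fderiv ℝ finv y (fun i => d (y i)) := by
  rintro y ⟨x, hx, rfl⟩
  -- f is C¹ on Ω
  have hcd : ContDiffOn ℝ 1 f Ω := by
    rw [← zero_add (1 : WithTop ℕ∞), contDiffOn_succ_iff_fderiv_of_isOpen hΩopen]
    refine ⟨fun z hz => (hf z hz).differentiableWithinAt, by simp, contDiffOn_zero.2 hfc⟩
  have hca : ContDiffAt ℝ 1 f x := hcd.contDiffAt (hΩopen.mem_nhds hx)
  -- the derivative as a continuous linear equiv
  have hbij := hfns x hx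
  let e : (Fin n → ℝ) ≃L[ℝ] (Fin n → ℝ) :=
    LinearEquiv.toContinuousLinearEquivOfContinuous
      (LinearEquiv.ofBijective (fderiv ℝ f x).toLinearMap hbij)
      (fderiv ℝ f x).continuous
  have hecoe : ∀ v, e v = fderiv ℝ f x v := fun v => rfl
  have hstrict : HasStrictFDerivAt f (e : (Fin n → ℝ) →L[ℝ] (Fin n → ℝ)) x := by
    exact hca.hasStrictFDerivAt one_ne_zero
  -- finv is a local left inverse of f near x
  have hg : ∀ᶠ z in nhds x, finv (f z) = z :=
    Filter.eventually_of_mem (hΩopen.mem_nhds hx) hfinv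
  have hinvstrict : HasStrictFDerivAt finv
      (e.symm : (Fin n → ℝ) →L[ℝ] (Fin n → ℝ)) (f x) :=
    hstrict.to_local_left_inverse hg
  have hfd : fderiv ℝ finv (f x) = (e.symm : (Fin n → ℝ) →L[ℝ] (Fin n → ℝ)) :=
    hinvstrict.hasFDerivAt.fderiv
  rw [hfinv x hx, hfd]
  have key : e (fun i => d (x i)) = (fun i => d (f x i)) := (hdf x hx).symm
  exact (ContinuousLinearEquiv.eq_symm_apply e).mpr key
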